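/- Let G be a finite simple graph and let F be a spanning subgraph of G such that the edge set of F is maximal among spanning subgraphs minimizing the deviation ∇_H(F) = Σ_v min{|d_F(v) − h| : h ∈ H(v)}, where H(v) = {1,3,...,f(v)−1, f(v)} with f even-valued, f ≥ 4, and d_G(v) ≥ f(v) − 1 for all v. If d_F(v) ≤ f(v) for all v and F is not an H-factor, then there exists an edge e of G not in F such that F + e has the same deviation as F. -/
import Mathlib


open SimpleGraph

/-- Degree of `v` in `F` (no decidability assumptions). -/
noncomputable def ndeg {V : Type*} (F : SimpleGraph V) (v : V) : ℕ :=
  Nat.card (F.neighborSet v)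

/-- Distance from `d` to the set `H_f = {1,3,…,f-1,f}` (`f` even). -/
noncomputable def devAt (f d : ℕ) : ℕ :=
  sInf {k : ℕ | ∃ h : ℕ, ((Odd h ∧ h ≤ f) ∨ h = f) ∧ k = ((d : ℤ) - (h : ℤ)).natAbs}

/-- Deviation `∇_{H_f}(F)` of a spanning subgraph `F`. -/
noncomputable def dev {V : Type*} [Fintype V] (f : V → ℕ) (F : SimpleGraph V) : ℕ :=
  ∑ v : V, devAt (f v) (ndeg F v)

lemma devAt_le {f d h : ℕ} (hh : (Odd h ∧ h ≤ f) ∨ h = f) :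
    devAt f d ≤ ((d : ℤ) - (h : ℤ)).natAbs :=
  Nat.sInf_le ⟨h, hh, rfl⟩

lemma devAt_exists (f d : ℕ) :
    ∃ h : ℕ, ((Odd h ∧ h ≤ f) ∨ h = f) ∧ devAt f d = ((d : ℤ) - (h : ℤ)).natAbs := by
  have : devAt f d ∈ {k : ℕ | ∃ h : ℕ, ((Odd h ∧ h ≤ f) ∨ h = f) ∧ k = ((d : ℤ) - (h : ℤ)).natAbs} :=
    Nat.sInf_mem ⟨((d : ℤ) - (f : ℤ)).natAbs, f, Or.inr rfl, rfl⟩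
  exact this

lemma devAt_succ_le (f d : ℕ) : devAt f (d + 1) ≤ devAt f d + 1 := by
  obtain ⟨h, hh, he⟩ := devAt_exists f d
  calc devAt f (d + 1) ≤ (((d + 1 : ℕ) : ℤ) - (h : ℤ)).natAbs := devAt_le hh
    _ ≤ ((d : ℤ) - (h : ℤ)).natAbs + 1 := by
        have h1 : (((d + 1 : ℕ) : ℤ) - (h : ℤ)) = ((d : ℤ) - h) + 1 := by push_cast; ring
        rw [h1]
        calc (((d : ℤ) - h) + 1).natAbs ≤ ((d : ℤ) - h).natAbs + (1 : ℤ).natAbs :=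
              Int.natAbs_add_le _ _
          _ = ((d : ℤ) - h).natAbs + 1 := rfl
    _ = devAt f d + 1 := by rw [he]

lemma devAt_pos {f d : ℕ} (hev : Even d) (hne : d ≠ f) : 1 ≤ devAt f d := by
  by_contra hc
  push_neg at hc
  interval_cases h : devAt f d
  obtain ⟨k, hk, he⟩ := devAt_exists f d
  rw [h] at he
  have : (d : ℤ) = k := by omega
  have hdk : d = k := by exact_mod_cast this
  rcases hk with ⟨ho, _⟩ | hfk
  · rw [← hdk] at ho; exact (Nat.not_even_iff_odd.mpr ho) hev
  · exact hne (hdk ▸ hfk)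

lemma devAt_eq_zero {f d : ℕ} (ho : Odd d) (hd : d ≤ f) : devAt f d = 0 :=
  Nat.le_zero.mp (by simpa using devAt_le (f := f) (d := d) (h := d) (Or.inl ⟨ho, hd⟩))

lemma ndeg_eq_ncard {V : Type*} (F : SimpleGraph V) (v : V) :
    ndeg F v = (F.neighborSet v).ncard := (Nat.card_coe_set_eq _)

/-- If `F` is an edge-maximal deviation minimizer with `d_F ≤ f` everywhere and `F` is
not an `H_f`-factor, then some edge of `G` outside `F` can be added without changing the
deviation. -/
theorem stmt_14 {V : Type*} [Fintype V] (G : SimpleGraph V)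
    (f : V → ℕ) (hfe : ∀ v, Even (f v)) (hf4 : ∀ v, 4 ≤ f v)
    (hdeg : ∀ v, f v - 1 ≤ ndeg G v)
    (F : SimpleGraph V) (hF : F ≤ G)
    (hmin : ∀ F' : SimpleGraph V, F' ≤ G → dev f F ≤ dev f F')
    (hmax : ∀ F' : SimpleGraph V, F' ≤ G → dev f F' = dev f F → F ≤ F' → F' = F)
    (hle : ∀ v, ndeg F v ≤ f v)
    (hnotfac : ¬ ∀ v : V, (Odd (ndeg F v) ∧ ndeg F v ≤ f v - 1) ∨ ndeg F v = f v) :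
    ∃ e ∈ G.edgeSet, e ∉ F.edgeSet ∧
      dev f (F ⊔ SimpleGraph.fromEdgeSet {e}) = dev f F := by

  classical
  push_neg at hnotfac
  obtain ⟨v, hv1, hv2⟩ := hnotfac
  set d := ndeg F v with hd
  have hdf : d ≤ f v := hle v
  -- d is even
  have hdev : Even d := by
    by_contra hodd
    rw [Nat.not_even_iff_odd] at hodd
    have := hv1 hodd
    omega
  have hdlt : d < f v - 1 := by
    obtain ⟨k, hk⟩ := hdev
    obtain ⟨m, hm⟩ := hfe v
    have := hf4 v
    omega
  -- find a neighbor of v in G not in F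
  have hsub : F.neighborSet v ⊆ G.neighborSet v := fun x hx => hF hx
  have hGfin : (G.neighborSet v).Finite := Set.toFinite _
  have hex : ∃ w, G.Adj v w ∧ ¬ F.Adj v w := by
    by_contra hc
    push_neg at hc
    have hsub' : G.neighborSet v ⊆ F.neighborSet v := fun x hx => hc x hx
    have := Set.ncard_le_ncard hsub' (Set.toFinite _)
    rw [← ndeg_eq_ncard, ← ndeg_eq_ncard] at this
    have := hdeg v
    omega
  obtain ⟨w, hGvw, hFvw⟩ := hex
  have hvw : v ≠ w := G.ne_of_adj hGvw
  refine ⟨s(v, w), hGvw, ?_, ?_⟩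
  · simpa using hFvw
  set F' := F ⊔ SimpleGraph.fromEdgeSet {s(v, w)} with hF'
  have hF'G : F' ≤ G := by
    apply sup_le hF
    intro a b hab
    rw [fromEdgeSet_adj] at hab
    obtain ⟨hab1, hab2⟩ := hab
    simp only [Set.mem_singleton_iff, Sym2.eq, Sym2.rel_iff', Prod.mk.injEq, Prod.swap_prod_mk] at hab1
    rcases hab1 with ⟨rfl, rfl⟩ | ⟨rfl, rfl⟩
    · exact hGvw
    · exact hGvw.symm
  -- adjacency description of F'
  have hadj : ∀ a b, F'.Adj a b ↔ F.Adj a b ∨ ((a = v ∧ b = w) ∨ (a = w ∧ b = v)) := by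
    intro a b
    rw [hF', sup_adj, fromEdgeSet_adj, Set.mem_singleton_iff, Sym2.eq_iff]
    constructor
    · rintro (h | ⟨(⟨rfl, rfl⟩ | ⟨rfl, rfl⟩), _⟩)
      · exact Or.inl h
      · exact Or.inr (Or.inl ⟨rfl, rfl⟩)
      · exact Or.inr (Or.inr ⟨rfl, rfl⟩)
    · rintro (h | ⟨rfl, rfl⟩ | ⟨rfl, rfl⟩)
      · exact Or.inl h
      · exact Or.inr ⟨Or.inl ⟨rfl, rfl⟩, hvw⟩
      · exact Or.inr ⟨Or.inr ⟨rfl, rfl⟩, hvw.symm⟩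
  -- neighbor sets
  have hNv : F'.neighborSet v = insert w (F.neighborSet v) := by
    ext x
    rw [Set.mem_insert_iff, mem_neighborSet, mem_neighborSet, hadj]
    constructor
    · rintro (h | ⟨-, rfl⟩ | ⟨h, rfl⟩)
      · exact Or.inr h
      · exact Or.inl rfl
      · exact absurd h hvw
    · rintro (rfl | h)
      · exact Or.inr (Or.inl ⟨rfl, rfl⟩)
      · exact Or.inl h
  have hNw : F'.neighborSet w = insert v (F.neighborSet w) := by
    ext x
    rw [Set.mem_insert_iff, mem_neighborSet, mem_neighborSet, hadj]
    constructor
    · rintro (h | ⟨h, rfl⟩ | ⟨-, rfl⟩)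
      · exact Or.inr h
      · exact absurd h.symm hvw
      · exact Or.inl rfl
    · rintro (rfl | h)
      · exact Or.inr (Or.inr ⟨rfl, rfl⟩)
      · exact Or.inl h
  have hNu : ∀ u, u ≠ v → u ≠ w → F'.neighborSet u = F.neighborSet u := by
    intro u hu1 hu2
    ext x
    rw [mem_neighborSet, mem_neighborSet, hadj]
    constructor
    · rintro (h | ⟨rfl, rfl⟩ | ⟨rfl, rfl⟩)
      · exact h
      · exact absurd rfl hu1
      · exact absurd rfl hu2
    · exact fun h => Or.inl h
  -- degrees
  have hdv : ndeg F' v = ndeg F v + 1 := by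
    rw [ndeg_eq_ncard, ndeg_eq_ncard, hNv]
    exact Set.ncard_insert_of_notMem hFvw (Set.toFinite _)
  have hdw : ndeg F' w = ndeg F w + 1 := by
    rw [ndeg_eq_ncard, ndeg_eq_ncard, hNw]
    exact Set.ncard_insert_of_notMem (fun h => hFvw (F.adj_symm h)) (Set.toFinite _)
  have hdu : ∀ u, u ≠ v → u ≠ w → ndeg F' u = ndeg F u := by
    intro u h1 h2
    rw [ndeg_eq_ncard, ndeg_eq_ncard, hNu u h1 h2]
  -- deviation at v drops to 0
  have hdevv' : devAt (f v) (ndeg F' v) = 0 := by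
    rw [hdv, ← hd]
    exact devAt_eq_zero (Even.add_one hdev) (by omega)
  have hdevv : 1 ≤ devAt (f v) (ndeg F v) := devAt_pos hdev (by omega)
  have hdevw : devAt (f w) (ndeg F' w) ≤ devAt (f w) (ndeg F w) + 1 := by
    rw [hdw]; exact devAt_succ_le _ _
  -- sum comparison
  have hsum : dev f F' ≤ dev f F := by
    unfold dev
    have hwmem : w ∈ (Finset.univ.erase v) := Finset.mem_erase.mpr ⟨hvw.symm, Finset.mem_univ w⟩
    rw [← Finset.add_sum_erase _ _ (Finset.mem_univ v),
        ← Finset.add_sum_erase _ _ (Finset.mem_univ v),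
        ← Finset.add_sum_erase _ _ hwmem, ← Finset.add_sum_erase _ _ hwmem]
    have heq : ∑ u ∈ (Finset.univ.erase v).erase w, devAt (f u) (ndeg F' u)
        = ∑ u ∈ (Finset.univ.erase v).erase w, devAt (f u) (ndeg F u) := by
      apply Finset.sum_congr rfl
      intro u hu
      rw [Finset.mem_erase, Finset.mem_erase] at hu
      rw [hdu u hu.2.1 hu.1]
    rw [heq]
    have := hdevv'
    omega
  exact le_antisymm hsum (hmin F' hF'G)
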